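/- Let G be a 3-edge-colorable cubic graph and let e₁, e₂ ∈ E(G). Then (G, 𝟙) has a nowhere-zero 4-flow (D, φ) with φ(f) > 0 for every edge f and φ(e₁) = φ(e₂) = 1. -/

import Mathlib

open Finset SimpleGraph

attribute [local instance] Classical.propDecidable

variable {V : Type}

/-- `σ` is a valid `±1` signature on the edges of `G`. -/
def IsSignature (G : SimpleGraph V) (σ : Sym2 V → ℤ) : Prop :=
  ∀ e ∈ G.edgeSet, σ e = 1 ∨ σ e = -1

/-- The set of negative edges of the signed graph `(G, σ)`. -/
def NegEdges (G : SimpleGraph V) (σ : Sym2 V → ℤ) : Set (Sym2 V) :=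
  {e | e ∈ G.edgeSet ∧ σ e = -1}

/-- A bidirected orientation of the signed graph `(G, σ)`: `τ v e = 1` means that the
half-edge of `e` at `v` points towards `v`, and `τ v e = -1` that it points away from `v`.
On a positive edge the two half-edges are directed consistently, while on a negative edge
both half-edges point outwards (extroverted) or both point inwards (introverted). -/
def IsOrientation (G : SimpleGraph V) (σ : Sym2 V → ℤ) (τ : V → Sym2 V → ℤ) : Prop :=
  (∀ v e, τ v e = 1 ∨ τ v e = -1) ∧
  ∀ u v, G.Adj u v → τ u s(u, v) * τ v s(u, v) = - σ s(u, v)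

/-- `(τ, φ)` is an integer-valued flow on the signed graph `(G, σ)`:
Kirchhoff's law holds at every vertex. -/
def IsFlow [Fintype V] (G : SimpleGraph V) (σ : Sym2 V → ℤ)
    (τ : V → Sym2 V → ℤ) (φ : Sym2 V → ℤ) : Prop :=
  IsOrientation G σ τ ∧
    ∀ v : V, (∑ w : V, if G.Adj v w then τ v s(v, w) * φ s(v, w) else 0) = 0

/-- `(τ, φ)` is a nowhere-zero `k`-flow on `(G, σ)`. -/
def IsNZFlow [Fintype V] (G : SimpleGraph V) (σ : Sym2 V → ℤ) (k : ℤ)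
    (τ : V → Sym2 V → ℤ) (φ : Sym2 V → ℤ) : Prop :=
  IsFlow G σ τ φ ∧ ∀ e ∈ G.edgeSet, 0 < |φ e| ∧ |φ e| < k

/-- A signed graph is flow-admissible if it admits a nowhere-zero `k`-flow for some `k`. -/
def FlowAdmissible [Fintype V] (G : SimpleGraph V) (σ : Sym2 V → ℤ) : Prop :=
  ∃ (k : ℤ) (τ : V → Sym2 V → ℤ) (φ : Sym2 V → ℤ), IsNZFlow G σ k τ φ

/-- The flow number `F(G, σ)`: the least `k` admitting a nowhere-zero `k`-flow. -/
noncomputable def flowNumber [Fintype V] (G : SimpleGraph V) (σ : Sym2 V → ℤ) : ℕ :=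
  sInf {k : ℕ | ∃ τ φ, IsNZFlow G σ (k : ℤ) τ φ}

/-- An edge-cut of `G`: the set of edges crossing a nontrivial vertex partition. -/
def IsEdgeCut (G : SimpleGraph V) (X : Set (Sym2 V)) : Prop :=
  ∃ S : Set V, S.Nonempty ∧ Sᶜ.Nonempty ∧
    X = {e | e ∈ G.edgeSet ∧ ∃ a ∈ S, ∃ b ∈ Sᶜ, e = s(a, b)}

/-- The all-positive signature. -/
def allPos : Sym2 V → ℤ := fun _ => 1

/-- `G` is cubic (3-regular). -/
def CubicGraph (G : SimpleGraph V) : Prop := ∀ v : V, (G.neighborSet v).ncard = 3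

/-- `G` has no bridge. -/
def Bridgeless (G : SimpleGraph V) : Prop := ∀ e ∈ G.edgeSet, ¬ G.IsBridge e

/-- A walk is directed (with respect to the orientation `τ` of `(G, σ)`) if every dart of
the walk traverses a positive edge in the direction of its orientation. -/
def IsDirectedWalk {G : SimpleGraph V} (σ : Sym2 V → ℤ) (τ : V → Sym2 V → ℤ) {u v : V}
    (p : G.Walk u v) : Prop :=
  ∀ d ∈ p.darts, σ s(d.toProd.1, d.toProd.2) = 1 ∧
    τ d.toProd.2 s(d.toProd.1, d.toProd.2) = 1

/-- `M` is a perfect matching (1-factor) of `G`. -/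
def IsPM (G : SimpleGraph V) (M : Set (Sym2 V)) : Prop :=
  M ⊆ G.edgeSet ∧ ∀ v : V, ∃! e, e ∈ M ∧ v ∈ e

/-- `c` is a proper 3-edge-coloring of `G`. -/
def IsProper3EdgeColoring (G : SimpleGraph V) (c : Sym2 V → Fin 3) : Prop :=
  ∀ e₁ ∈ G.edgeSet, ∀ e₂ ∈ G.edgeSet, e₁ ≠ e₂ → (∃ w, w ∈ e₁ ∧ w ∈ e₂) → c e₁ ≠ c e₂


namespace Stmt12Aux

def ap (x y : V → V) (b : Bool) (v : V) : V := if b then x v else y v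

def ev (x y : V → V) : List Bool → V → V
  | [], v => v
  | b :: l, v => ap x y b (ev x y l v)

lemma ev_append (x y : V → V) (l₁ l₂ : List Bool) (v : V) :
    ev x y (l₁ ++ l₂) v = ev x y l₁ (ev x y l₂ v) := by
  induction l₁ with
  | nil => rfl
  | cons b l ih =>
    show ap x y b (ev x y (l ++ l₂) v) = _
    rw [ih]
    rfl

lemma ap_ap {x y : V → V} (hx : ∀ v, x (x v) = v) (hy : ∀ v, y (y v) = v)
    (b : Bool) (v : V) : ap x y b (ap x y b v) = v := by
  cases b <;> simp [ap, hx, hy]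

lemma ap_ne {x y : V → V} (hx' : ∀ v, x v ≠ v) (hy' : ∀ v, y v ≠ v)
    (b : Bool) (v : V) : ap x y b v ≠ v := by
  cases b <;> simp [ap, hx', hy']

lemma ev_reverse {x y : V → V} (hx : ∀ v, x (x v) = v) (hy : ∀ v, y (y v) = v)
    (l : List Bool) (v : V) : ev x y l.reverse (ev x y l v) = v := by
  induction l generalizing v with
  | nil => rfl
  | cons b l ih =>
    rw [List.reverse_cons, ev_append]
    show ev x y l.reverse (ev x y [b] (ap x y b (ev x y l v))) = v
    have h1 : ev x y [b] (ap x y b (ev x y l v)) = ev x y l v := ap_ap hx hy b _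
    rw [h1, ih]

lemma no_odd {x y : V → V} (hx : ∀ v, x (x v) = v) (hy : ∀ v, y (y v) = v)
    (hx' : ∀ v, x v ≠ v) (hy' : ∀ v, y v ≠ v) :
    ∀ (n : ℕ) (l : List Bool) (v : V), l.length = n → Odd n → ev x y l v ≠ v := by
  intro n
  induction n using Nat.strong_induction_on with
  | _ n ih =>
    intro l v hlen hodd hev
    by_cases hchain : l.Chain' (· ≠ ·)
    · -- alternating case
      obtain ⟨k, hk⟩ := hodd
      have hlenl : l.length = 2 * k + 1 := by omega
      rw [show l.Chain' (· ≠ ·) ↔ l.IsChain (· ≠ ·) from Iff.rfl, List.isChain_iff_getElem] at hchain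
      have hstep : ∀ (i : ℕ) (hi : i + 1 < l.length), l[i + 1]'(hi) = ! l[i]'(by omega) := by
        intro i hi
        have := hchain i (by omega)
        revert this
        generalize l[i]'(by omega) = a
        generalize l[i+1]'(by omega) = b
        revert a b; decide
      have htwo : ∀ (i : ℕ) (hi : i + 1 + 1 < l.length), l[i + 1 + 1]'(hi) = l[i]'(by omega) := by
        intro i hi
        rw [hstep (i+1) (by omega), hstep i (by omega), Bool.not_not]
      have hmul : ∀ (m i : ℕ) (hi : i + 2 * m < l.length), l[i + 2 * m]'(hi) = l[i]'(by omega) := by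
        intro m
        induction m with
        | zero => intro i _; rfl
        | succ m ihm =>
          intro i hi
          have e2 : l[i + 2 * (m + 1)]'(hi) = l[(i + 2 * m) + 1 + 1]'(by omega) := by
            congr 1 <;> omega
          rw [e2, htwo (i + 2 * m) (by omega), ihm i (by omega)]
      have hpar : ∀ (i j : ℕ) (hi : i < l.length) (hj : j < l.length), i % 2 = j % 2 →
          l[i]'(hi) = l[j]'(hj) := by
        intro i j hi hj hp
        rcases le_total i j with h | h
        · obtain ⟨m, rfl⟩ : ∃ m, j = i + 2 * m := ⟨(j - i) / 2, by omega⟩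
          exact (hmul m i hj).symm
        · obtain ⟨m, rfl⟩ : ∃ m, i = j + 2 * m := ⟨(i - j) / 2, by omega⟩
          exact hmul m j hi
      set u := l.take k with hu
      have hulen : u.length = k := by simp [hu]; omega
      have hulen' : (List.take k l).length = k := by
        rw [List.length_take]; omega
      have hdrop : l.drop (k + 1) = u.reverse := by
        apply List.ext_getElem
        · simp [hu]; omega
        · intro j h1 h2
          rw [List.getElem_drop, List.getElem_reverse]
          simp only [hu, List.getElem_take, hulen']
          rw [List.length_drop] at h1
          exact hpar (k + 1 + j) (k - 1 - j) (by omega) (by omega) (by omega)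
      have hl : l = u ++ l[k]'(by omega) :: u.reverse := by
        conv_lhs => rw [← List.take_append_drop k l]
        rw [List.drop_eq_getElem_cons (by omega), hdrop]
      rw [hl, ev_append] at hev
      have hev2 : ev x y u (ap x y (l[k]'(by omega)) (ev x y u.reverse v)) = v := hev
      have h3 := congrArg (ev x y u.reverse) hev2
      rw [ev_reverse hx hy] at h3
      exact ap_ne hx' hy' _ _ h3
    · -- cancellation case
      rw [show l.Chain' (· ≠ ·) ↔ l.IsChain (· ≠ ·) from Iff.rfl, List.isChain_iff_getElem] at hchain
      push_neg at hchain
      obtain ⟨i, hi, heq⟩ := hchain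
      have hlen2 : 2 ≤ l.length := by omega
      set L1 := l.take i with hL1
      set rest := l.drop (i + 2) with hrest
      have hsplit : l = L1 ++ l[i]'(by omega) :: l[i]'(by omega) :: rest := by
        conv_lhs => rw [← List.take_append_drop i l]
        rw [List.drop_eq_getElem_cons (i := i) (by omega),
          List.drop_eq_getElem_cons (i := i + 1) (by omega), ← heq]
      have hev2 : ev x y (L1 ++ rest) v = v := by
        rw [hsplit, ev_append] at hev
        have : ev x y (l[i]'(by omega) :: l[i]'(by omega) :: rest) v = ev x y rest v := by
          show ap x y _ (ap x y _ (ev x y rest v)) = _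
          exact ap_ap hx hy _ _
        rw [this] at hev
        rw [ev_append]; exact hev
      have hlen3 : (L1 ++ rest).length = n - 2 := by
        simp [hL1, hrest]; omega
      exact ih (n - 2) (by omega) (L1 ++ rest) v hlen3 (by obtain ⟨m, hm⟩ := hodd; exact ⟨m - 1, by omega⟩) hev2


lemma twoColor {x y : V → V} (hx : ∀ v, x (x v) = v) (hy : ∀ v, y (y v) = v)
    (hx' : ∀ v, x v ≠ v) (hy' : ∀ v, y v ≠ v) (v₀ : V) (ε : ℤ) (hε : ε = 1 ∨ ε = -1) :
    ∃ d : V → ℤ, (∀ v, d v = 1 ∨ d v = -1) ∧ (∀ v, d (x v) = -d v) ∧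
      (∀ v, d (y v) = -d v) ∧ d v₀ = ε := by
  classical
  set R : V → V → Prop := fun u v => ∃ l, ev x y l u = v with hR
  set E : V → V → Prop := fun u v => ∃ l, Even (List.length l) ∧ ev x y l u = v with hE
  have Rrefl : ∀ v, R v v := fun v => ⟨[], rfl⟩
  have Rtrans : ∀ {a b c'}, R a b → R b c' → R a c' := by
    rintro a b c' ⟨l₁, h₁⟩ ⟨l₂, h₂⟩
    exact ⟨l₂ ++ l₁, by rw [ev_append, h₁, h₂]⟩
  have Rsymm : ∀ {a b}, R a b → R b a := by
    rintro a b ⟨l, h⟩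
    exact ⟨l.reverse, by rw [← h, ev_reverse hx hy]⟩
  have Rstep : ∀ (b : Bool) (v : V), R v (ap x y b v) := fun b v => ⟨[b], rfl⟩
  have key : ∀ (u v : V) (b : Bool), R u v → (E u (ap x y b v) ↔ ¬ E u v) := by
    intro u v b hRuv
    constructor
    · rintro ⟨l₂, hl₂e, hl₂⟩ ⟨l₁, hl₁e, hl₁⟩
      have hclosed : ev x y (b :: (l₂ ++ l₁.reverse)) v = v := by
        show ap x y b (ev x y (l₂ ++ l₁.reverse) v) = v
        rw [ev_append, ← hl₁, ev_reverse hx hy, hl₁, hl₂]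
        exact ap_ap hx hy b v
      have hodd : Odd (b :: (l₂ ++ l₁.reverse)).length := by
        simp only [List.length_cons, List.length_append, List.length_reverse]
        exact (hl₂e.add hl₁e).add_one
      exact no_odd hx hy hx' hy' _ _ v rfl hodd hclosed
    · intro hnE
      obtain ⟨l, hl⟩ := hRuv
      rcases Nat.even_or_odd l.length with he | ho
      · exact absurd ⟨l, he, hl⟩ hnE
      · refine ⟨b :: l, ?_, ?_⟩
        · simpa [List.length_cons] using ho.add_one
        · show ap x y b (ev x y l u) = _
          rw [hl]
  let s : Setoid V := ⟨R, ⟨Rrefl, fun h => Rsymm h, fun h1 h2 => Rtrans h1 h2⟩⟩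
  let rep : V → V := fun v => (Quotient.mk s v).out
  have hrepR : ∀ v, R (rep v) v := fun v => Quotient.mk_out (s := s) v
  have hrep_step : ∀ (b : Bool) (v : V), rep (ap x y b v) = rep v := by
    intro b v
    show (Quotient.mk s (ap x y b v)).out = (Quotient.mk s v).out
    congr 1
    exact Quotient.sound (Rsymm (Rstep b v))
  set d : V → ℤ := fun v => if R v₀ v then (if E v₀ v then ε else -ε)
    else (if E (rep v) v then 1 else -1) with hd
  have hflip : ∀ (b : Bool) (v : V), d (ap x y b v) = - d v := by
    intro b v
    by_cases hRv : R v₀ v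
    · have hRv' : R v₀ (ap x y b v) := Rtrans hRv (Rstep b v)
      rw [hd]
      simp only [if_pos hRv, if_pos hRv']
      have hk := key v₀ v b hRv
      by_cases hEv : E v₀ v
      · rw [if_pos hEv, if_neg (fun h => (hk.mp h) hEv)]
      · rw [if_neg hEv, if_pos (hk.mpr hEv), neg_neg]
    · have hRv' : ¬ R v₀ (ap x y b v) := fun h => hRv (Rtrans h (Rsymm (Rstep b v)))
      rw [hd]
      simp only [if_neg hRv, if_neg hRv', hrep_step b v]
      have hk := key (rep v) v b (hrepR v)
      by_cases hEv : E (rep v) v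
      · rw [if_pos hEv, if_neg (fun h => (hk.mp h) hEv)]
      · rw [if_neg hEv, if_pos (hk.mpr hEv), neg_neg]
  refine ⟨d, ?_, ?_, ?_, ?_⟩
  · intro v
    rw [hd]
    dsimp only
    split_ifs
    · exact hε
    · rcases hε with h | h <;> rw [h] <;> simp
    · exact Or.inl rfl
    · exact Or.inr rfl
  · intro v
    have := hflip true v
    simpa [ap] using this
  · intro v
    have := hflip false v
    simpa [ap] using this
  · rw [hd]
    simp only [if_pos (Rrefl v₀)]
    rw [if_pos ⟨[], Even.zero, rfl⟩]


end Stmt12Aux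

namespace Stmt12Aux

lemma nbhd_exists [Fintype V] {G : SimpleGraph V} (hcubic : CubicGraph G)
    {c : Sym2 V → Fin 3} (hc : IsProper3EdgeColoring G c) (v : V) (i : Fin 3) :
    ∃! w, G.Adj v w ∧ c s(v, w) = i := by
  classical
  have hinj : ∀ w, G.Adj v w → ∀ w', G.Adj v w' → c s(v, w) = c s(v, w') → w = w' := by
    intro w hw w' hw' hcc
    by_contra hne
    have hne2 : s(v, w) ≠ s(v, w') := by
      rw [Ne, Sym2.congr_right]; exact hne
    exact hc s(v, w) hw s(v, w') hw' hne2 ⟨v, Sym2.mem_mk_left v w, Sym2.mem_mk_left v w'⟩ hcc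
  set t : Finset V := Set.toFinset (G.neighborSet v) with ht
  have htmem : ∀ w, w ∈ t ↔ G.Adj v w := by
    intro w; rw [ht, Set.mem_toFinset]; exact SimpleGraph.mem_neighborSet G v w
  have htc : t.card = 3 := by
    rw [ht, ← Set.ncard_eq_toFinset_card']; exact hcubic v
  have himg : (t.image fun w => c s(v, w)).card = 3 := by
    rw [Finset.card_image_of_injOn, htc]
    intro w hw w' hw' hcc
    exact hinj w ((htmem w).mp hw) w' ((htmem w').mp hw') hcc
  have huniv : t.image (fun w => c s(v, w)) = Finset.univ :=
    Finset.eq_univ_of_card _ (by rw [himg]; simp)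
  have hi : i ∈ t.image (fun w => c s(v, w)) := huniv ▸ Finset.mem_univ i
  obtain ⟨w, hwt, hwc⟩ := Finset.mem_image.mp hi
  have hwadj : G.Adj v w := (htmem w).mp hwt
  exact ⟨w, ⟨hwadj, hwc⟩, fun w' ⟨h1, h2⟩ => hinj w' h1 w hwadj (h2.trans hwc.symm)⟩

end Stmt12Aux

/-- A 3-edge-colorable cubic graph has a nowhere-zero 4-flow with all
values positive and value 1 on two prescribed edges. -/
theorem stmt12 [Fintype V] (G : SimpleGraph V) (hcubic : CubicGraph G)
    (c : Sym2 V → Fin 3) (hc : IsProper3EdgeColoring G c)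
    (e₁ e₂ : Sym2 V) (he₁ : e₁ ∈ G.edgeSet) (he₂ : e₂ ∈ G.edgeSet) :
    ∃ τ φ, IsNZFlow G allPos 4 τ φ ∧ (∀ f ∈ G.edgeSet, 0 < φ f) ∧
      φ e₁ = 1 ∧ φ e₂ = 1 := by
  classical
  have hrep : ∀ e : Sym2 V, ∃ u w : V, e = s(u, w) := fun e =>
    Sym2.ind (fun a b => ⟨a, b, rfl⟩) e
  obtain ⟨u₁, w₁, he₁eq⟩ := hrep e₁
  obtain ⟨u₂, w₂, he₂eq⟩ := hrep e₂
  have hadj₁ : G.Adj u₁ w₁ := by rw [he₁eq] at he₁; exact he₁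
  have hadj₂ : G.Adj u₂ w₂ := by rw [he₂eq] at he₂; exact he₂
  have hEU := fun (i : Fin 3) (v : V) => Stmt12Aux.nbhd_exists hcubic hc v i
  choose nn hP hU using hEU
  have hadj : ∀ i v, G.Adj v (nn i v) := fun i v => (hP i v).1
  have hcol : ∀ i v, c s(v, nn i v) = i := fun i v => (hP i v).2
  have huniq : ∀ i v w, G.Adj v w → c s(v, w) = i → w = nn i v :=
    fun i v w h1 h2 => hU i v w ⟨h1, h2⟩
  have hninv : ∀ i v, nn i (nn i v) = v := fun i v =>
    (huniq i (nn i v) v (hadj i v).symm (by rw [Sym2.eq_swap]; exact hcol i v)).symm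
  have hnfpf : ∀ i v, nn i v ≠ v := fun i v h => G.irrefl (h ▸ hadj i v)
  have hstep' : ∀ i u w, G.Adj u w → c s(u, w) = i → u = nn i w := by
    intro i u w h hcc
    exact huniq i w u h.symm (by rwa [Sym2.eq_swap])
  set A : Fin 3 := c e₁ with hA
  have hfin3 : ∀ a b : Fin 3, b ≠ a →
      ∃ c', c' ≠ a ∧ c' ≠ b ∧ ∀ i : Fin 3, i = a ∨ i = b ∨ i = c' := by decide
  have hsucc : ∀ a : Fin 3, a + 1 ≠ a := by decide
  have hBC : ∃ B C : Fin 3, B ≠ A ∧ C ≠ A ∧ C ≠ B ∧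
      (∀ i : Fin 3, i = A ∨ i = B ∨ i = C) ∧ (c e₂ = A ∨ c e₂ = B) := by
    by_cases h2 : c e₂ = A
    · obtain ⟨C, hc1, hc2, hc3⟩ := hfin3 A (A + 1) (hsucc A)
      exact ⟨A + 1, C, hsucc A, hc1, hc2, hc3, Or.inl h2⟩
    · obtain ⟨C, hc1, hc2, hc3⟩ := hfin3 A (c e₂) h2
      exact ⟨c e₂, C, h2, hc1, hc2, hc3, Or.inr rfl⟩
  obtain ⟨B, C, hBA, hCA, hCB, hcover, he2col⟩ := hBC
  obtain ⟨d₁, hd₁pm, hd₁A, hd₁B, -⟩ :=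
    Stmt12Aux.twoColor (hninv A) (hninv B) (hnfpf A) (hnfpf B) u₂ 1 (Or.inl rfl)
  obtain ⟨d₂, hd₂pm, hd₂B, hd₂C, hd₂w⟩ :=
    Stmt12Aux.twoColor (hninv B) (hninv C) (hnfpf B) (hnfpf C) w₂ (-(d₁ u₂))
      (by rcases hd₁pm u₂ with h | h <;> rw [h] <;> norm_num)
  set f : V → V → ℤ := fun u w =>
    if G.Adj u w then
      (if c s(u, w) = A then d₁ w else if c s(u, w) = B then d₁ u + 2 * d₂ w else 2 * d₂ u)
    else 0 with hf
  have hf0 : ∀ u w, ¬ G.Adj u w → f u w = 0 := by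
    intro u w h; rw [hf]; dsimp only; rw [if_neg h]
  have hfA : ∀ u w, G.Adj u w → c s(u, w) = A → f u w = d₁ w := by
    intro u w h h'; rw [hf]; dsimp only; rw [if_pos h, if_pos h']
  have hfB : ∀ u w, G.Adj u w → c s(u, w) = B → f u w = d₁ u + 2 * d₂ w := by
    intro u w h h'
    rw [hf]; dsimp only; rw [if_pos h, if_neg (by rw [h']; exact hBA), if_pos h']
  have hfC : ∀ u w, G.Adj u w → c s(u, w) ≠ A → c s(u, w) ≠ B → f u w = 2 * d₂ u := by
    intro u w h h1 h2
    rw [hf]; dsimp only; rw [if_pos h, if_neg h1, if_neg h2]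
  have hCcol : ∀ u w, G.Adj u w → c s(u, w) ≠ A → c s(u, w) ≠ B → c s(u, w) = C := by
    intro u w h h1 h2
    rcases hcover (c s(u, w)) with h' | h' | h'
    · exact absurd h' h1
    · exact absurd h' h2
    · exact h'
  have hanti : ∀ u w, f u w = - f w u := by
    intro u w
    by_cases h : G.Adj u w
    · have h' := h.symm
      have hsw : c s(w, u) = c s(u, w) := by rw [Sym2.eq_swap]
      by_cases hA' : c s(u, w) = A
      · rw [hfA u w h hA', hfA w u h' (by rw [hsw]; exact hA')]
        rw [huniq A u w h hA']
        exact hd₁A u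
      · by_cases hB' : c s(u, w) = B
        · rw [hfB u w h hB', hfB w u h' (by rw [hsw]; exact hB')]
          have e1 : d₁ w = - d₁ u := by rw [huniq B u w h hB']; exact hd₁B u
          have e2 : d₂ u = - d₂ w := by rw [hstep' B u w h hB']; exact hd₂B w
          rw [e1, e2]; ring
        · have hC' := hCcol u w h hA' hB'
          rw [hfC u w h hA' hB', hfC w u h' (by rw [hsw]; exact hA') (by rw [hsw]; exact hB')]
          have e2 : d₂ w = - d₂ u := by rw [huniq C u w h hC']; exact hd₂C u
          rw [e2]; ring
    · rw [hf0 u w h, hf0 w u (fun hh => h hh.symm), neg_zero]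
  have hval : ∀ u w, G.Adj u w → 1 ≤ |f u w| ∧ |f u w| ≤ 3 := by
    intro u w h
    by_cases hA' : c s(u, w) = A
    · rw [hfA u w h hA']
      rcases hd₁pm w with e | e <;> rw [e] <;> norm_num
    · by_cases hB' : c s(u, w) = B
      · rw [hfB u w h hB']
        rcases hd₁pm u with e1 | e1 <;> rcases hd₂pm w with e2 | e2 <;> rw [e1, e2] <;> norm_num
      · rw [hfC u w h hA' hB']
        rcases hd₂pm u with e | e <;> rw [e] <;> norm_num
  have hnij : ∀ (i j : Fin 3) (v : V), i ≠ j → nn i v ≠ nn j v := by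
    intro i j v hij he
    apply hij
    rw [← hcol i v, he, hcol j v]
  have hcons : ∀ v, (∑ w : V, f v w) = 0 := by
    intro v
    have hsub : (∑ w : V, f v w) = ∑ w ∈ ({nn A v, nn B v, nn C v} : Finset V), f v w := by
      symm
      apply Finset.sum_subset (Finset.subset_univ _)
      intro w _ hw
      by_cases h : G.Adj v w
      · exfalso
        apply hw
        rcases hcover (c s(v, w)) with h' | h' | h' <;> rw [huniq _ v w h h'] <;> simp
      · exact hf0 v w h
    rw [hsub]
    rw [Finset.sum_insert (by simp [hnij A B v (Ne.symm hBA), hnij A C v (Ne.symm hCA)]),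
      Finset.sum_pair (hnij B C v (Ne.symm hCB))]
    rw [hfA v _ (hadj A v) (hcol A v),
      hfB v _ (hadj B v) (hcol B v),
      hfC v _ (hadj C v) (by rw [hcol C v]; exact hCA) (by rw [hcol C v]; exact hCB),
      hd₁A v, hd₂B v]
    ring
  have habs : ∀ u w, |f u w| = |f w u| := fun u w => by rw [hanti u w, abs_neg]
  set φ : Sym2 V → ℤ := Sym2.lift ⟨fun u w => |f u w|, habs⟩ with hφ
  set hsg : V → V → ℤ := fun u w => if f u w < 0 then 1 else -1 with hhsg
  have hsgpm : ∀ u w, hsg u w = 1 ∨ hsg u w = -1 := by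
    intro u w; rw [hhsg]; dsimp only; split_ifs <;> simp
  have hτsymm : ∀ (v u w : V), (if v = u then hsg v w else if v = w then hsg v u else 1)
      = (if v = w then hsg v u else if v = u then hsg v w else 1) := by
    intro v u w
    by_cases h1 : v = u <;> by_cases h2 : v = w
    · subst h1; subst h2; rfl
    · subst h1; simp [h2]
    · subst h2; simp [h1]
    · simp [h1, h2]
  set τ : V → Sym2 V → ℤ := fun v => Sym2.lift
    ⟨fun u w => if v = u then hsg v w else if v = w then hsg v u else 1,
     fun u w => hτsymm v u w⟩ with hτ
  have hφval : ∀ u w, φ s(u, w) = |f u w| := by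
    intro u w; rw [hφ]; exact Sym2.lift_mk _ u w
  have hτval : ∀ v w, τ v s(v, w) = hsg v w := by
    intro v w; rw [hτ]; dsimp only; rw [Sym2.lift_mk]; dsimp only; rw [if_pos rfl]
  have hτval2 : ∀ u v, u ≠ v → τ v s(u, v) = hsg v u := by
    intro u v h
    rw [hτ]; dsimp only; rw [Sym2.lift_mk]; dsimp only
    rw [if_neg (fun hh => h hh.symm), if_pos rfl]
  have hfne : ∀ u w, G.Adj u w → f u w ≠ 0 := by
    intro u w h h0
    have := (hval u w h).1
    rw [h0] at this; simp at this
  refine ⟨τ, φ, ⟨⟨⟨?_, ?_⟩, ?_⟩, ?_⟩, ?_, ?_, ?_⟩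
  · intro v e
    induction e using Sym2.ind with
    | _ a b =>
      rw [hτ]; dsimp only; rw [Sym2.lift_mk]; dsimp only
      split_ifs
      exacts [hsgpm v b, hsgpm v a, Or.inl rfl]
  · intro u v h
    have hne : u ≠ v := G.ne_of_adj h
    rw [hτval u v, hτval2 u v hne]
    have h1 : allPos s(u, v) = 1 := rfl
    rw [h1, hhsg]; dsimp only
    have hne0 := hfne u v h
    have ha := hanti u v
    rcases lt_trichotomy (f u v) 0 with hlt | h0 | hgt
    · rw [if_pos hlt, if_neg (by omega)]; norm_num
    · exact absurd h0 hne0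
    · rw [if_neg (by omega), if_pos (by omega)]; norm_num
  · intro v
    have hterm : ∀ w, (if G.Adj v w then τ v s(v, w) * φ s(v, w) else 0) = - f v w := by
      intro w
      by_cases h : G.Adj v w
      · rw [if_pos h, hτval, hφval, hhsg]; dsimp only
        rcases lt_trichotomy (f v w) 0 with hlt | h0 | hgt
        · rw [if_pos hlt, abs_of_neg hlt, one_mul]
        · rw [h0]; simp
        · rw [if_neg (by omega), abs_of_pos hgt]; ring
      · rw [if_neg h, hf0 v w h, neg_zero]
    rw [Finset.sum_congr rfl (fun w _ => hterm w), Finset.sum_neg_distrib, hcons v, neg_zero]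
  · intro e he
    revert he
    induction e using Sym2.ind with
    | _ a b =>
      intro he
      have h : G.Adj a b := he
      rw [hφval a b]
      obtain ⟨h1, h2⟩ := hval a b h
      constructor
      · rw [abs_abs]; omega
      · rw [abs_abs]; omega
  · intro e he
    revert he
    induction e using Sym2.ind with
    | _ a b =>
      intro he
      rw [hφval a b]
      have := (hval a b he).1
      omega
  · rw [he₁eq, hφval]
    rw [hfA u₁ w₁ hadj₁ (by rw [← he₁eq])]
    rcases hd₁pm w₁ with e | e <;> rw [e] <;> norm_num
  · rw [he₂eq, hφval]
    rcases he2col with h2 | h2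
    · rw [hfA u₂ w₂ hadj₂ (by rw [← he₂eq]; exact h2)]
      rcases hd₁pm w₂ with e | e <;> rw [e] <;> norm_num
    · rw [hfB u₂ w₂ hadj₂ (by rw [← he₂eq]; exact h2), hd₂w]
      rcases hd₁pm u₂ with e | e <;> rw [e] <;> norm_num
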